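/- For fixed $t > 0$ and $x \neq 0$, $\lim_{\varepsilon \downarrow 0} \varepsilon\,\mathrm{arsinh}\big(e^{t/\varepsilon}\sinh(x/\varepsilon)\big) = x + t\,\mathrm{sign}(x)$. -/

import Mathlib

open Filter Real Set

private lemma exp_neg_div_tendsto (a : ℝ) (ha : 0 < a) :
    Tendsto (fun ε : ℝ => Real.exp (-(a / ε))) (nhdsWithin 0 (Set.Ioi 0)) (nhds 0) := by
  apply Real.tendsto_exp_atBot.comp
  apply tendsto_neg_atTop_atBot.comp
  have h := tendsto_inv_nhdsGT_zero.const_mul_atTop (l := nhdsWithin (0:ℝ) (Set.Ioi 0)) ha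
  exact h.congr (fun ε => (div_eq_mul_inv a ε).symm)

private lemma aux_pos (t x : ℝ) (ht : 0 < t) (hx : 0 < x) :
    Tendsto (fun ε : ℝ => ε * Real.arsinh (Real.exp (t / ε) * Real.sinh (x / ε)))
      (nhdsWithin 0 (Set.Ioi 0)) (nhds (x + t)) := by
  set L := nhdsWithin (0:ℝ) (Set.Ioi 0) with hL
  have hsinh_exp : ∀ s : ℝ, Real.sinh s * Real.exp (-s) = (1 - Real.exp (-(2*s)))/2 := by
    intro s
    rw [Real.sinh_eq, show -(2*s) = -s + -s by ring, Real.exp_add, Real.exp_neg]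
    have h : Real.exp s ≠ 0 := (Real.exp_pos s).ne'
    field_simp

  -- Term 1
  have T1 : Tendsto (fun ε : ℝ => Real.exp (t/ε) * Real.sinh (x/ε) * Real.exp (-((t+x)/ε)))
      L (nhds (1/2)) := by
    have heq : ∀ ε ∈ Set.Ioi (0:ℝ),
        Real.exp (t/ε) * Real.sinh (x/ε) * Real.exp (-((t+x)/ε))
          = (1 - Real.exp (-((2*x)/ε)))/2 := by
      intro ε hε
      have hε' : ε ≠ 0 := ne_of_gt hε
      have h1 : Real.exp (t/ε) * Real.exp (-((t+x)/ε)) = Real.exp (-(x/ε)) := by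
        rw [← Real.exp_add]; congr 1; field_simp; ring
      calc Real.exp (t/ε) * Real.sinh (x/ε) * Real.exp (-((t+x)/ε))
          = Real.sinh (x/ε) * (Real.exp (t/ε) * Real.exp (-((t+x)/ε))) := by ring
        _ = Real.sinh (x/ε) * Real.exp (-(x/ε)) := by rw [h1]
        _ = (1 - Real.exp (-(2*(x/ε))))/2 := hsinh_exp _
        _ = (1 - Real.exp (-((2*x)/ε)))/2 := by rw [mul_div_assoc]
    have H := exp_neg_div_tendsto (2*x) (by linarith)
    have H2 : Tendsto (fun ε : ℝ => (1 - Real.exp (-((2*x)/ε)))/2) L (nhds (1/2)) := by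
      have := (tendsto_const_nhds (x := (1:ℝ)) (f := L)).sub H
      have := this.div_const 2
      simpa using this
    exact H2.congr' (by filter_upwards [self_mem_nhdsWithin] with ε hε using (heq ε hε).symm)
  -- Term 2
  have T2 : Tendsto (fun ε : ℝ =>
      Real.sqrt (1 + (Real.exp (t/ε) * Real.sinh (x/ε))^2) * Real.exp (-((t+x)/ε)))
      L (nhds (1/2)) := by
    have heq : ∀ ε : ℝ,
        Real.sqrt (1 + (Real.exp (t/ε) * Real.sinh (x/ε))^2) * Real.exp (-((t+x)/ε))
          = Real.sqrt ((Real.exp (-((t+x)/ε)))^2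
              + (Real.exp (t/ε) * Real.sinh (x/ε) * Real.exp (-((t+x)/ε)))^2) := by
      intro ε
      calc Real.sqrt (1 + (Real.exp (t/ε) * Real.sinh (x/ε))^2) * Real.exp (-((t+x)/ε))
          = Real.sqrt (1 + (Real.exp (t/ε) * Real.sinh (x/ε))^2)
            * Real.sqrt ((Real.exp (-((t+x)/ε)))^2) := by
            rw [Real.sqrt_sq (Real.exp_nonneg _)]
        _ = Real.sqrt ((1 + (Real.exp (t/ε) * Real.sinh (x/ε))^2)
            * (Real.exp (-((t+x)/ε)))^2) := (Real.sqrt_mul (by positivity) _).symm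
        _ = Real.sqrt ((Real.exp (-((t+x)/ε)))^2
            + (Real.exp (t/ε) * Real.sinh (x/ε) * Real.exp (-((t+x)/ε)))^2) := by
            congr 1; ring
    have Hinner : Tendsto (fun ε : ℝ => (Real.exp (-((t+x)/ε)))^2
        + (Real.exp (t/ε) * Real.sinh (x/ε) * Real.exp (-((t+x)/ε)))^2) L (nhds (1/4)) := by
      have H := exp_neg_div_tendsto (t+x) (by linarith)
      have := (H.pow 2).add (T1.pow 2)
      norm_num at this
      convert this using 2
      try norm_num
    have := (Real.continuous_sqrt.tendsto (1/4)).comp Hinner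
    have h14 : Real.sqrt (1/4) = 1/2 := by
      rw [show (1/4 : ℝ) = (1/2)^2 by norm_num, Real.sqrt_sq (by norm_num)]
    rw [h14] at this
    exact this.congr (fun ε => (heq ε).symm)
  -- h tends to 1
  have H1 : Tendsto (fun ε : ℝ =>
      (Real.exp (t/ε) * Real.sinh (x/ε)
        + Real.sqrt (1 + (Real.exp (t/ε) * Real.sinh (x/ε))^2)) * Real.exp (-((t+x)/ε)))
      L (nhds 1) := by
    have := T1.add T2
    norm_num at this
    exact this.congr (fun ε => by ring)
  -- log h tends to 0
  have H2 : Tendsto (fun ε : ℝ =>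
      Real.log ((Real.exp (t/ε) * Real.sinh (x/ε)
        + Real.sqrt (1 + (Real.exp (t/ε) * Real.sinh (x/ε))^2)) * Real.exp (-((t+x)/ε))))
      L (nhds 0) := by
    have := (Real.continuousAt_log (one_ne_zero)).tendsto.comp H1
    simpa [Function.comp_def] using this
  -- ε tends to 0
  have Hid : Tendsto (fun ε : ℝ => ε) L (nhds 0) := tendsto_id.mono_left nhdsWithin_le_nhds
  have H3 := Hid.mul H2
  norm_num at H3
  -- eventual equality
  have key : ∀ ε ∈ Set.Ioi (0:ℝ),
      ε * Real.arsinh (Real.exp (t / ε) * Real.sinh (x / ε))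
        = (x + t) + ε * Real.log ((Real.exp (t/ε) * Real.sinh (x/ε)
            + Real.sqrt (1 + (Real.exp (t/ε) * Real.sinh (x/ε))^2)) * Real.exp (-((t+x)/ε))) := by
    intro ε hε
    have hε' : (ε : ℝ) ≠ 0 := ne_of_gt hε
    set y := Real.exp (t/ε) * Real.sinh (x/ε) with hy
    have hpos : 0 < y + Real.sqrt (1 + y^2) := by
      rw [← Real.exp_arsinh]; exact Real.exp_pos _
    have harsinh : Real.arsinh y = Real.log (y + Real.sqrt (1 + y^2)) := rfl
    rw [Real.log_mul (ne_of_gt hpos) (Real.exp_ne_zero _), Real.log_exp, ← harsinh]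
    have h2 : ε * -((t+x)/ε) = -(t+x) := by field_simp
    rw [mul_add, h2]; ring
  have final : Tendsto (fun ε : ℝ => (x + t)
      + ε * Real.log ((Real.exp (t/ε) * Real.sinh (x/ε)
          + Real.sqrt (1 + (Real.exp (t/ε) * Real.sinh (x/ε))^2)) * Real.exp (-((t+x)/ε))))
      L (nhds (x + t)) := by
    have := (tendsto_const_nhds (x := x + t) (f := L)).add H3
    simpa using this
  exact final.congr' (by filter_upwards [self_mem_nhdsWithin] with ε hε using (key ε hε).symm)

theorem stmt_7 (t x : ℝ) (ht : 0 < t) (hx : x ≠ 0) :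
    Tendsto (fun ε : ℝ => ε * Real.arsinh (Real.exp (t / ε) * Real.sinh (x / ε)))
      (nhdsWithin 0 (Set.Ioi 0)) (nhds (x + t * Real.sign x)) := by
  rcases hx.lt_or_gt with hneg | hpos
  · have h := aux_pos t (-x) ht (by linarith)
    have hodd : ∀ ε : ℝ, ε * Real.arsinh (Real.exp (t / ε) * Real.sinh (x / ε))
        = -(ε * Real.arsinh (Real.exp (t / ε) * Real.sinh (-x / ε))) := by
      intro ε
      rw [neg_div, Real.sinh_neg, mul_neg, Real.arsinh_neg]
      ring
    have := h.neg
    rw [Real.sign_of_neg hneg]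
    have hval : -(-x + t) = x + t * (-1) := by ring
    rw [← hval]
    exact this.congr (fun ε => (hodd ε).symm)
  · rw [Real.sign_of_pos hpos]
    have := aux_pos t x ht hpos
    simpa using this
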